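/- arXiv:2004.13315 — 3 statements merged into one kernel-verified Lean document; each statement's English description precedes it below -/
import Mathlib

section
/- Under the hypotheses of the H-circle separation setup, if an H-circle β separates two points of an H-circle α, then β intersects both connected components of Ξ − α. -/
open Set Topology

/-- The standard circle: the unit sphere in the Euclidean plane. -/
abbrev StdCircle : Type := Metric.sphere (0 : EuclideanSpace ℝ (Fin 2)) 1

/-- A subset of `Ξ` is an embedded circle if it is the image of a topological embedding of
the standard circle. -/
def IsEmbCircle {Ξ : Type*} [TopologicalSpace Ξ] (α : Set Ξ) : Prop :=
  ∃ f : StdCircle → Ξ, IsEmbedding f ∧ Set.range f = α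

/-- In the H-circle setup (with the knowledge that complements of H-circles have exactly two
components whose frontier is the full circle), if an H-circle `β` separates two points of an
H-circle `α`, then `β` intersects both connected components of `Ξ − α`. -/
theorem separating_hcircle_meets_both_components {Ξ : Type*} [TopologicalSpace Ξ]
    [CompactSpace Ξ] [ConnectedSpace Ξ] [LocallyConnectedSpace Ξ]
    [TopologicalSpace.MetrizableSpace Ξ]
    (𝓒 : Set (Set Ξ))
    (hcirc : ∀ α ∈ 𝓒, IsEmbCircle α)
    (hnocut : ∀ x : Ξ, IsConnected ({x}ᶜ : Set Ξ))
    (hint : ∀ α ∈ 𝓒, ∀ β ∈ 𝓒, α ≠ β → (α ∩ β).Finite ∧ (α ∩ β).ncard ≤ 2)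
    (hsep : ∀ x y : Ξ, x ≠ y → ∃ α ∈ 𝓒, x ∉ α ∧ y ∉ α ∧
      connectedComponentIn αᶜ x ≠ connectedComponentIn αᶜ y)
    (hbasis : TopologicalSpace.IsTopologicalBasis
      {U : Set Ξ | ∃ α ∈ 𝓒, ∃ x ∉ α, U = connectedComponentIn αᶜ x})
    (htwo : ∀ α ∈ 𝓒, ∃ A B : Set Ξ, A ≠ B ∧
      {C : Set Ξ | ∃ x ∈ αᶜ, C = connectedComponentIn αᶜ x} = {A, B} ∧
      frontier A = α ∧ frontier B = α)
    (α β : Set Ξ) (hα : α ∈ 𝓒) (hβ : β ∈ 𝓒)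
    (a a' : Ξ) (ha : a ∈ α \ β) (ha' : a' ∈ α \ β)
    (hsepβ : connectedComponentIn βᶜ a ≠ connectedComponentIn βᶜ a') :
    ∀ C : Set Ξ, (∃ x ∈ αᶜ, C = connectedComponentIn αᶜ x) → (β ∩ C).Nonempty := by
  intro C hC
  by_contra hempty
  obtain ⟨x, hx, hCx⟩ := hC
  -- C misses β
  have hCsub : C ⊆ βᶜ := fun y hy hyβ => hempty ⟨y, hyβ, hy⟩
  have hxC : x ∈ C := by rw [hCx]; exact mem_connectedComponentIn hx
  -- frontier C = α
  obtain ⟨A, B, hAB, hset, hfA, hfB⟩ := htwo α hα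
  have hCmem : C ∈ ({A, B} : Set (Set Ξ)) := by
    rw [← hset]; exact ⟨x, hx, hCx⟩
  have hfC : frontier C = α := by
    rcases hCmem with h | h <;> rw [h] <;> [exact hfA; exact hfB]
  -- C sits inside the component D of βᶜ containing x
  set D := connectedComponentIn βᶜ x with hD
  have hCD : C ⊆ D := by
    rw [hCx]
    exact (isPreconnected_connectedComponentIn).subset_connectedComponentIn
      (mem_connectedComponentIn hx) (hCx ▸ hCsub)
  -- any point of α \ β lies in the same component of βᶜ as x
  have key : ∀ b, b ∈ α \ β → connectedComponentIn βᶜ b = D := by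
    intro b ⟨hbα, hbβ⟩
    have hbcl : b ∈ closure D :=
      closure_mono hCD (frontier_subset_closure (hfC ▸ hbα))
    have hspre : IsPreconnected (insert b D) :=
      (isPreconnected_connectedComponentIn).subset_closure
        (subset_insert b D) (insert_subset hbcl subset_closure)
    have hssub : insert b D ⊆ βᶜ :=
      insert_subset hbβ (connectedComponentIn_subset βᶜ x)
    have hsub : insert b D ⊆ connectedComponentIn βᶜ b :=
      hspre.subset_connectedComponentIn (mem_insert b D) hssub
    have hxmem : x ∈ connectedComponentIn βᶜ b :=
      hsub (mem_insert_of_mem b (mem_connectedComponentIn (hCsub hxC)))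
    exact connectedComponentIn_eq hxmem
  exact hsepβ ((key a ha).trans (key a' ha').symm)
end

section
/- Let α and β be two H-circles in Ξ intersecting in exactly two points c, c'. Then the two arcs of α − {c, c'} lie in the same connected component of Ξ − β if and only if the two arcs of β − {c, c'} lie in the same connected component of Ξ − α. -/
theorem stdsphere_infinite : (Metric.sphere (0 : EuclideanSpace ℝ (Fin 2)) 1 : Set _).Infinite := by
  have h1 : (1 : Cardinal) < Module.rank ℝ (EuclideanSpace ℝ (Fin 2)) := by
    rw [rank_eq_card_basis (EuclideanSpace.basisFun (Fin 2) ℝ).toBasis]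
    simp
  have hconn := isConnected_sphere h1 (0 : EuclideanSpace ℝ (Fin 2)) (zero_le_one)
  refine hconn.isPreconnected.infinite_of_nontrivial ?_
  refine ⟨EuclideanSpace.single 0 (1:ℝ), ?_, EuclideanSpace.single 0 (-1:ℝ), ?_, ?_⟩
  · simp [Metric.mem_sphere, EuclideanSpace.norm_single]
  · simp [Metric.mem_sphere, EuclideanSpace.norm_single]
  · intro h
    have := congrArg (fun f : EuclideanSpace ℝ (Fin 2) => f 0) h
    simp [EuclideanSpace.single_apply] at this
    linarith

open Set Topology

theorem hcircle_key {Ξ : Type*} [TopologicalSpace Ξ] [LocallyConnectedSpace Ξ]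
    (σ τ : Set Ξ) (c c' : Ξ)
    (htwoσ : ∃ A B : Set Ξ, A ≠ B ∧
      {C : Set Ξ | ∃ x ∈ σᶜ, C = connectedComponentIn σᶜ x} = {A, B} ∧
      frontier A = σ ∧ frontier B = σ)
    (hστ : σ ∩ τ = {c, c'})
    (hτcl : IsClosed τ)
    (hτne : (τ \ {c, c'}).Nonempty)
    (hsame : ∀ u ∈ τ \ {c, c'}, ∀ v ∈ τ \ {c, c'},
      connectedComponentIn σᶜ u = connectedComponentIn σᶜ v)
    (x : Ξ) (hx : x ∈ σ \ {c, c'}) (y : Ξ) (hy : y ∈ σ \ {c, c'}) :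
    connectedComponentIn τᶜ x = connectedComponentIn τᶜ y := by
  obtain ⟨u₀, hu₀⟩ := hτne
  have hτσ : ∀ u ∈ τ \ {c, c'}, u ∈ σᶜ := by
    rintro u ⟨huτ, hucc⟩ huσ
    exact hucc (by rw [← hστ]; exact ⟨huσ, huτ⟩)
  have hστ' : ∀ u ∈ σ \ {c, c'}, u ∈ τᶜ := by
    rintro u ⟨huσ, hucc⟩ huτ
    exact hucc (by rw [← hστ]; exact ⟨huσ, huτ⟩)
  obtain ⟨A₀, B₀, hAB, hset, hfA, hfB⟩ := htwoσ
  set U := connectedComponentIn σᶜ u₀ with hU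
  have hUmem : U ∈ ({A₀, B₀} : Set (Set Ξ)) := by
    rw [← hset]; exact ⟨u₀, hτσ u₀ hu₀, rfl⟩
  obtain ⟨V, hVmem, hVU, hfV⟩ : ∃ V ∈ ({A₀, B₀} : Set (Set Ξ)), V ≠ U ∧ frontier V = σ := by
    rcases hUmem with h | h
    · exact ⟨B₀, Or.inr rfl, by rw [h]; exact hAB.symm, hfB⟩
    · exact ⟨A₀, Or.inl rfl, by rw [h]; exact hAB, hfA⟩
  obtain ⟨z, hzσ, hzV⟩ : ∃ z ∈ σᶜ, V = connectedComponentIn σᶜ z := by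
    have : V ∈ {C : Set Ξ | ∃ x ∈ σᶜ, C = connectedComponentIn σᶜ x} := hset ▸ hVmem
    exact this
  have hzmem : z ∈ V := by rw [hzV]; exact mem_connectedComponentIn hzσ
  have hVUdisj : ∀ w, w ∈ V → w ∉ U := by
    intro w hwV hwU
    have h1 : connectedComponentIn σᶜ u₀ = connectedComponentIn σᶜ w :=
      connectedComponentIn_eq hwU
    have h2 : connectedComponentIn σᶜ z = connectedComponentIn σᶜ w :=
      connectedComponentIn_eq (by rw [hzV] at hwV; exact hwV)
    exact hVU (by rw [hzV, hU, h2, h1])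
  have hVτ : V ⊆ τᶜ := by
    intro w hwV hwτ
    have hwσ : w ∈ σᶜ := connectedComponentIn_subset σᶜ z (by rwa [← hzV])
    have hwd : w ∈ τ \ {c, c'} := ⟨hwτ, fun hw => hwσ (by rw [← hστ] at hw; exact hw.1)⟩
    have heq : connectedComponentIn σᶜ w = U := hsame w hwd u₀ hu₀
    exact hVUdisj w hwV (heq ▸ mem_connectedComponentIn hwσ)
  have hVsub : V ⊆ connectedComponentIn τᶜ z := by
    refine IsPreconnected.subset_connectedComponentIn ?_ hzmem hVτ
    rw [hzV]; exact isPreconnected_connectedComponentIn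
  have key : ∀ p ∈ σ \ {c, c'}, connectedComponentIn τᶜ p = connectedComponentIn τᶜ z := by
    intro p hp
    have hpτ : p ∈ τᶜ := hστ' p hp
    have hpcl : p ∈ closure V := by
      rw [← hfV] at hp
      exact hp.1.1
    have hopen : IsOpen (connectedComponentIn τᶜ p) :=
      hτcl.isOpen_compl.connectedComponentIn
    obtain ⟨w, hw1, hw2⟩ :=
      mem_closure_iff.mp hpcl _ hopen (mem_connectedComponentIn hpτ)
    exact (connectedComponentIn_eq hw1).trans (connectedComponentIn_eq (hVsub hw2)).symm
  rw [key x hx, key y hy]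

open Set Topology

/-- Two-state lemma: if the H-circles `α, β` intersect in exactly the two points `c, c'`,
then the two arcs of `α − {c,c'}` lie in the same connected component of `Ξ − β` if and only
if the two arcs of `β − {c,c'}` lie in the same connected component of `Ξ − α`. -/
theorem hcircle_two_state {Ξ : Type*} [TopologicalSpace Ξ]
    [CompactSpace Ξ] [ConnectedSpace Ξ] [LocallyConnectedSpace Ξ]
    [TopologicalSpace.MetrizableSpace Ξ]
    (𝓒 : Set (Set Ξ))
    (hcirc : ∀ α ∈ 𝓒, IsEmbCircle α)
    (hnocut : ∀ x : Ξ, IsConnected ({x}ᶜ : Set Ξ))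
    (hint : ∀ α ∈ 𝓒, ∀ β ∈ 𝓒, α ≠ β → (α ∩ β).Finite ∧ (α ∩ β).ncard ≤ 2)
    (hsep : ∀ x y : Ξ, x ≠ y → ∃ α ∈ 𝓒, x ∉ α ∧ y ∉ α ∧
      connectedComponentIn αᶜ x ≠ connectedComponentIn αᶜ y)
    (hbasis : TopologicalSpace.IsTopologicalBasis
      {U : Set Ξ | ∃ α ∈ 𝓒, ∃ x ∉ α, U = connectedComponentIn αᶜ x})
    (htwo : ∀ α ∈ 𝓒, ∃ A B : Set Ξ, A ≠ B ∧
      {C : Set Ξ | ∃ x ∈ αᶜ, C = connectedComponentIn αᶜ x} = {A, B} ∧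
      frontier A = α ∧ frontier B = α)
    (α β : Set Ξ) (hα : α ∈ 𝓒) (hβ : β ∈ 𝓒)
    (c c' : Ξ) (hcc' : c ≠ c') (hαβ : α ∩ β = {c, c'}) :
    (∀ x ∈ α \ {c, c'}, ∀ y ∈ α \ {c, c'},
        connectedComponentIn βᶜ x = connectedComponentIn βᶜ y) ↔
      (∀ x ∈ β \ {c, c'}, ∀ y ∈ β \ {c, c'},
        connectedComponentIn αᶜ x = connectedComponentIn αᶜ y) := by

  haveI : T2Space Ξ := by
    letI : MetricSpace Ξ := TopologicalSpace.metrizableSpaceMetric Ξ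
    infer_instance
  haveI : Infinite StdCircle := Set.infinite_coe_iff.mpr stdsphere_infinite
  have hclosed : ∀ γ ∈ 𝓒, IsClosed γ ∧ (γ \ {c, c'}).Nonempty := by
    intro γ hγ
    obtain ⟨f, hf, hrange⟩ := hcirc γ hγ
    constructor
    · rw [← hrange]
      exact (isCompact_range hf.continuous).isClosed
    · refine Set.Infinite.nonempty (Set.Infinite.diff ?_ (Set.toFinite {c, c'}))
      rw [← hrange]
      exact Set.infinite_range_of_injective hf.injective
  constructor
  · intro h x hx y hy
    exact hcircle_key β α c c' (htwo β hβ) (by rw [inter_comm]; exact hαβ)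
      (hclosed α hα).1 (hclosed α hα).2 h x hx y hy
  · intro h x hx y hy
    exact hcircle_key α β c c' (htwo α hα) hαβ
      (hclosed β hβ).1 (hclosed β hβ).2 h x hx y hy
end

section
/- Let Y be a locally connected topological space and Z ⊆ Y a closed subset. Then every connected component C of Y − Z embeds topologically into the space of sides Y ⋌ Z (via y ↦ (y, germ of C)), and the connected components of Y ⋌ Z are exactly the closures-with-sides C̃ = { (y, side) : C_U ⊆ C for all neighborhoods U of y } of the connected components C of Y − Z; in particular components of Y ⋌ Z correspond bijectively to components of Y − Z. -/
open Set Topology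

variable (Y : Type*) [TopologicalSpace Y] (Z : Set Y)

/-- A sided point of the pair `Z ⊆ Y`: a point `y` together with a side of `y`, i.e. a
compatible choice, for every open neighborhood `U` of `y`, of a connected component of
`U − Z`.  This is a germ of connected components of the complement of `Z` at `y`. -/
structure SidedPoint where
  /-- the underlying point -/
  pt : Y
  /-- the chosen component of `U − Z` for each open neighborhood `U` of `pt` -/
  comp : ∀ U : Set Y, IsOpen U → pt ∈ U → Set Y
  isComp : ∀ (U : Set Y) (hU : IsOpen U) (hy : pt ∈ U),
    ∃ x ∈ U \ Z, comp U hU hy = connectedComponentIn (U \ Z) x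
  mono : ∀ (U V : Set Y) (hU : IsOpen U) (hV : IsOpen V) (hyU : pt ∈ U) (hyV : pt ∈ V),
    U ⊆ V → comp U hU hyU ⊆ comp V hV hyV

/-- The topology on the space of sides, generated by the basic sets
`V(ȳ, U) = { ȳ' | y' ∈ U and C'_U = C_U }`. -/
instance : TopologicalSpace (SidedPoint Y Z) :=
  TopologicalSpace.generateFrom
    {S | ∃ (U C : Set Y) (hU : IsOpen U),
      S = {p : SidedPoint Y Z | ∃ h : p.pt ∈ U, p.comp U hU h = C}}


variable {Y Z}

/-- The subset of `Y ⋌ Z` of sided points all of whose germ components lie in `C`. -/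
def tildeSet (C : Set Y) : Set (SidedPoint Y Z) :=
  {p | ∀ (U : Set Y) (hU : IsOpen U) (hy : p.pt ∈ U), p.comp U hU hy ⊆ C}

-- auxiliary definitions and lemmas

/-- The canonical sided point at a point not in `Z`. -/
def SidedPoint.mk' (y : Y) (hy : y ∉ Z) : SidedPoint Y Z where
  pt := y
  comp U _ _ := connectedComponentIn (U \ Z) y
  isComp U _ hyU := ⟨y, ⟨hyU, hy⟩, rfl⟩
  mono U V _ _ _ _ hUV := connectedComponentIn_mono y (diff_subset_diff_left hUV)

lemma isOpen_basic' {U : Set Y} (C : Set Y) (hU : IsOpen U) :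
    IsOpen {p : SidedPoint Y Z | ∃ h : p.pt ∈ U, p.comp U hU h = C} :=
  TopologicalSpace.isOpen_generateFrom_of_mem ⟨U, C, hU, rfl⟩

lemma comp_univ_comps (p : SidedPoint Y Z) :
    ∃ x ∈ Zᶜ, p.comp Set.univ isOpen_univ (Set.mem_univ _) = connectedComponentIn Zᶜ x := by
  obtain ⟨x, hx, h⟩ := p.isComp Set.univ isOpen_univ (Set.mem_univ _)
  refine ⟨x, hx.2, ?_⟩
  rw [h, Set.compl_eq_univ_diff]

lemma mem_tildeSet_iff {x₀ : Y} (hx₀ : x₀ ∈ Zᶜ) {p : SidedPoint Y Z} :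
    p ∈ (tildeSet (connectedComponentIn Zᶜ x₀) : Set (SidedPoint Y Z)) ↔
      p.comp Set.univ isOpen_univ (Set.mem_univ _) = connectedComponentIn Zᶜ x₀ := by
  constructor
  · intro hp
    obtain ⟨x, hx, h⟩ := comp_univ_comps p
    have hxm : x ∈ p.comp Set.univ isOpen_univ (Set.mem_univ _) :=
      h ▸ mem_connectedComponentIn hx
    have hxC : x ∈ connectedComponentIn Zᶜ x₀ :=
      hp Set.univ isOpen_univ (Set.mem_univ _) hxm
    rw [h, connectedComponentIn_eq hxC]
  · intro h U hU hy
    exact (p.mono U Set.univ hU isOpen_univ hy (Set.mem_univ _) (Set.subset_univ U)).trans h.subset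

lemma isOpen_tildeSet {x₀ : Y} (hx₀ : x₀ ∈ Zᶜ) :
    IsOpen (tildeSet (connectedComponentIn Zᶜ x₀) : Set (SidedPoint Y Z)) := by
  have he : (tildeSet (connectedComponentIn Zᶜ x₀) : Set (SidedPoint Y Z)) =
      {p : SidedPoint Y Z | ∃ h : p.pt ∈ Set.univ,
        p.comp Set.univ isOpen_univ h = connectedComponentIn Zᶜ x₀} := by
    ext p
    exact ⟨fun hp => ⟨Set.mem_univ _, (mem_tildeSet_iff hx₀).1 hp⟩,
      fun ⟨h, hh⟩ => (mem_tildeSet_iff hx₀).2 hh⟩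
  rw [he]
  exact isOpen_basic' _ isOpen_univ

lemma isClosed_tildeSet {x₀ : Y} (hx₀ : x₀ ∈ Zᶜ) :
    IsClosed (tildeSet (connectedComponentIn Zᶜ x₀) : Set (SidedPoint Y Z)) := by
  rw [← isOpen_compl_iff, isOpen_iff_forall_mem_open]
  intro p hp
  refine ⟨{q : SidedPoint Y Z | ∃ h : q.pt ∈ Set.univ,
      q.comp Set.univ isOpen_univ h = p.comp Set.univ isOpen_univ (Set.mem_univ _)},
    ?_, isOpen_basic' _ isOpen_univ, ⟨Set.mem_univ _, rfl⟩⟩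
  rintro q ⟨h, hq⟩ hq'
  exact hp ((mem_tildeSet_iff hx₀).2 (hq.symm.trans ((mem_tildeSet_iff hx₀).1 hq')))

lemma continuous_pt : Continuous (SidedPoint.pt : SidedPoint Y Z → Y) := by
  refine continuous_def.mpr fun W hW => isOpen_iff_forall_mem_open.mpr fun p hp => ?_
  exact ⟨{q : SidedPoint Y Z | ∃ h : q.pt ∈ W, q.comp W hW h = p.comp W hW hp},
    fun q hq => hq.1, isOpen_basic' _ hW, ⟨hp, rfl⟩⟩

lemma continuous_mk' [LocallyConnectedSpace Y] (hZ : IsClosed Z) {s : Set Y}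
    (hs : ∀ y ∈ s, y ∉ Z) :
    Continuous (fun y : s => SidedPoint.mk' (y : Y) (hs y y.2)) := by
  rw [continuous_generateFrom_iff]
  rintro S ⟨U, C, hU, rfl⟩
  have hUZ : IsOpen (U \ Z) := hU.sdiff hZ
  have hT : IsOpen {x | x ∈ U \ Z ∧ connectedComponentIn (U \ Z) x = C} := by
    rcases Set.eq_empty_or_nonempty
        {x | x ∈ U \ Z ∧ connectedComponentIn (U \ Z) x = C} with h | ⟨x₀, hx₀⟩
    · rw [h]; exact isOpen_empty
    · have he : {x | x ∈ U \ Z ∧ connectedComponentIn (U \ Z) x = C} = C := by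
        ext x
        constructor
        · rintro ⟨hx, rfl⟩; exact mem_connectedComponentIn hx
        · intro hx
          have hx' : x ∈ connectedComponentIn (U \ Z) x₀ := hx₀.2 ▸ hx
          exact ⟨connectedComponentIn_subset _ _ hx',
            (connectedComponentIn_eq hx').symm.trans hx₀.2⟩
      rw [he, ← hx₀.2]
      exact hUZ.connectedComponentIn
  have he : (fun y : s => SidedPoint.mk' (y : Y) (hs y y.2)) ⁻¹'
        {p : SidedPoint Y Z | ∃ h : p.pt ∈ U, p.comp U hU h = C}
      = Subtype.val ⁻¹' {x | x ∈ U \ Z ∧ connectedComponentIn (U \ Z) x = C} := by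
    ext y
    constructor
    · rintro ⟨h, hc⟩; exact ⟨⟨h, hs y y.2⟩, hc⟩
    · rintro ⟨h, hc⟩; exact ⟨h.1, hc⟩
  rw [he]
  exact hT.preimage continuous_subtype_val

lemma mk'_mem_tildeSet {x : Y} (hx : x ∈ Zᶜ) :
    SidedPoint.mk' x hx ∈ (tildeSet (connectedComponentIn Zᶜ x) : Set (SidedPoint Y Z)) :=
  fun U _ _ => connectedComponentIn_mono x (fun a ha => ha.2)

lemma range_mk'_subset_tildeSet {x₀ : Y} (hx₀ : x₀ ∈ Zᶜ) :
    Set.range (fun y : (connectedComponentIn Zᶜ x₀ : Set Y) =>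
        SidedPoint.mk' (y : Y) (connectedComponentIn_subset Zᶜ x₀ y.2)) ⊆
      (tildeSet (connectedComponentIn Zᶜ x₀) : Set (SidedPoint Y Z)) := by
  rintro _ ⟨y, rfl⟩ U hU hy
  exact (connectedComponentIn_mono (y : Y) (fun a ha => ha.2)).trans
    (connectedComponentIn_eq y.2).symm.subset

lemma tildeSet_subset_closure_range {x₀ : Y} (hx₀ : x₀ ∈ Zᶜ) :
    (tildeSet (connectedComponentIn Zᶜ x₀) : Set (SidedPoint Y Z)) ⊆
      closure (Set.range (fun y : (connectedComponentIn Zᶜ x₀ : Set Y) =>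
        SidedPoint.mk' (y : Y) (connectedComponentIn_subset Zᶜ x₀ y.2))) := by
  intro p hp
  have hb := TopologicalSpace.isTopologicalBasis_of_subbasis
    (rfl : (inferInstance : TopologicalSpace (SidedPoint Y Z)) = TopologicalSpace.generateFrom _)
  rw [hb.mem_closure_iff]
  rintro _ ⟨f, ⟨hf, hfG⟩, rfl⟩ hpo
  choose! u c hu hS using fun s (hsf : s ∈ f) => hfG hsf
  set U : Set Y := ⋂ s ∈ f, u s with hUdef
  have hUopen : IsOpen U := hf.isOpen_biInter (fun s hsf => hu s hsf)
  have hpU : p.pt ∈ U := by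
    refine Set.mem_iInter₂.2 fun s hsf => ?_
    have := hpo s hsf
    rw [hS s hsf] at this
    exact this.1
  obtain ⟨x, hxUZ, hcomp⟩ := p.isComp U hUopen hpU
  have hxmem : x ∈ p.comp U hUopen hpU := hcomp ▸ mem_connectedComponentIn hxUZ
  have hxC : x ∈ connectedComponentIn Zᶜ x₀ := hp U hUopen hpU hxmem
  refine ⟨SidedPoint.mk' x hxUZ.2, Set.mem_sInter.2 fun s hsf => ?_, ⟨⟨x, hxC⟩, rfl⟩⟩
  rw [hS s hsf]
  have hps := hpo s hsf
  rw [hS s hsf] at hps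
  obtain ⟨hpts, hcs⟩ := hps
  have hUsub : U ⊆ u s := Set.biInter_subset_of_mem hsf
  have hxus : x ∈ p.comp (u s) (hu s hsf) hpts :=
    p.mono U (u s) hUopen (hu s hsf) hpU hpts hUsub hxmem
  obtain ⟨xs, hxs, hcomps⟩ := p.isComp (u s) (hu s hsf) hpts
  have hx' : x ∈ connectedComponentIn (u s \ Z) xs := hcomps ▸ hxus
  exact ⟨hUsub hxUZ.1, ((connectedComponentIn_eq hx').symm.trans hcomps.symm).trans hcs⟩

lemma tildeSet_eq_connectedComponent [LocallyConnectedSpace Y] (hZ : IsClosed Z)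
    {x₀ : Y} (hx₀ : x₀ ∈ Zᶜ) {p : SidedPoint Y Z}
    (hp : p ∈ (tildeSet (connectedComponentIn Zᶜ x₀) : Set (SidedPoint Y Z))) :
    (tildeSet (connectedComponentIn Zᶜ x₀) : Set (SidedPoint Y Z)) = connectedComponent p := by
  have hC : IsConnected (connectedComponentIn Zᶜ x₀) :=
    isConnected_connectedComponentIn_iff.2 hx₀
  haveI : ConnectedSpace (connectedComponentIn Zᶜ x₀ : Set Y) :=
    Subtype.connectedSpace hC
  have hcont : Continuous (fun y : (connectedComponentIn Zᶜ x₀ : Set Y) =>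
      SidedPoint.mk' (y : Y) (connectedComponentIn_subset Zᶜ x₀ y.2)) :=
    continuous_mk' hZ (fun y hy => connectedComponentIn_subset Zᶜ x₀ hy)
  have hrange : IsPreconnected (Set.range (fun y : (connectedComponentIn Zᶜ x₀ : Set Y) =>
      SidedPoint.mk' (y : Y) (connectedComponentIn_subset Zᶜ x₀ y.2))) :=
    (isConnected_range hcont).isPreconnected
  have hpre : IsPreconnected (tildeSet (connectedComponentIn Zᶜ x₀) : Set (SidedPoint Y Z)) :=
    hrange.subset_closure (range_mk'_subset_tildeSet hx₀) (tildeSet_subset_closure_range hx₀)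
  refine subset_antisymm (hpre.subset_connectedComponent hp) ?_
  exact IsClopen.connectedComponent_subset ⟨isClosed_tildeSet hx₀, isOpen_tildeSet hx₀⟩ hp

/-- For `Y` locally connected and `Z ⊆ Y` closed: every connected component `C` of `Y − Z`
embeds topologically into the space of sides `Y ⋌ Z` over the inclusion `C ⊆ Y`, and the
connected components of `Y ⋌ Z` are exactly the sets `C̃ = tildeSet C` for `C` a connected
component of `Y − Z`; the correspondence `C ↦ C̃` is a bijection between the components of
`Y − Z` and those of `Y ⋌ Z`. -/
theorem sidedPoint_components (Y : Type*) [TopologicalSpace Y] [LocallyConnectedSpace Y]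
    (Z : Set Y) (hZ : IsClosed Z) :
    (∀ C : Set Y, (∃ x ∈ Zᶜ, C = connectedComponentIn Zᶜ x) →
      ∃ e : C → SidedPoint Y Z, IsEmbedding e ∧ ∀ y : C, (e y).pt = (y : Y)) ∧
    {T : Set (SidedPoint Y Z) | ∃ p : SidedPoint Y Z, T = connectedComponent p}
      = (fun C => (tildeSet C : Set (SidedPoint Y Z))) ''
          {C : Set Y | ∃ x ∈ Zᶜ, C = connectedComponentIn Zᶜ x} ∧
    Set.InjOn (fun C => (tildeSet C : Set (SidedPoint Y Z)))
      {C : Set Y | ∃ x ∈ Zᶜ, C = connectedComponentIn Zᶜ x} := by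
  refine ⟨?_, ?_, ?_⟩
  · rintro C ⟨x, hx, rfl⟩
    refine ⟨fun y => SidedPoint.mk' (y : Y) (connectedComponentIn_subset Zᶜ x y.2),
      ?_, fun y => rfl⟩
    exact IsEmbedding.of_comp
      (continuous_mk' hZ (fun y hy => connectedComponentIn_subset Zᶜ x hy))
      continuous_pt IsEmbedding.subtypeVal
  · ext T
    constructor
    · rintro ⟨p, rfl⟩
      obtain ⟨x, hx, hcomp⟩ := comp_univ_comps p
      have hp : p ∈ (tildeSet (connectedComponentIn Zᶜ x) : Set (SidedPoint Y Z)) :=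
        (mem_tildeSet_iff hx).2 hcomp
      exact ⟨connectedComponentIn Zᶜ x, ⟨x, hx, rfl⟩,
        tildeSet_eq_connectedComponent hZ hx hp⟩
    · rintro ⟨C, ⟨x, hx, rfl⟩, rfl⟩
      exact ⟨SidedPoint.mk' x hx,
        tildeSet_eq_connectedComponent hZ hx (mk'_mem_tildeSet hx)⟩
  · rintro C ⟨x, hx, rfl⟩ C' ⟨x', hx', rfl⟩ h
    have hm : SidedPoint.mk' x hx ∈ (tildeSet (connectedComponentIn Zᶜ x) :
        Set (SidedPoint Y Z)) := mk'_mem_tildeSet hx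
    have h' : (tildeSet (connectedComponentIn Zᶜ x) : Set (SidedPoint Y Z)) =
        tildeSet (connectedComponentIn Zᶜ x') := h
    have hm' : SidedPoint.mk' x hx ∈ (tildeSet (connectedComponentIn Zᶜ x') :
        Set (SidedPoint Y Z)) := h' ▸ hm
    exact ((mem_tildeSet_iff hx).1 hm).symm.trans ((mem_tildeSet_iff hx').1 hm')
end
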